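/- Let R be a v-Marot Mori commutative ring. Then R is a weakly Krull ring if and only if the set of regular prime v-ideals of R equals the set X_r(R) of regular prime ideals of regular height one. -/

import Mathlib

namespace Paper

/-- The set of regular elements of a subset `A` of an ambient commutative ring `T`:
the elements of `A` that are non-zero-divisors on `A`. -/
def reg {T : Type*} [CommRing T] (A : Set T) : Set T :=
  {x | x ∈ A ∧ ∀ y ∈ A, x * y = 0 → y = 0}

/-- The units of a subset `A`: the elements of `A` having an inverse in `A`. -/
def unitsIn {T : Type*} [CommRing T] (A : Set T) : Set T :=
  {x | x ∈ A ∧ ∃ y ∈ A, x * y = 1}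

/-- `(R : X) = {z ∈ T : z·X ⊆ R}`. -/
def colonS {T : Type*} [CommRing T] (R : Subring T) (X : Set T) : Set T :=
  {z : T | ∀ x ∈ X, z * x ∈ R}

/-- The `v`-operation `X ↦ X_v = (X⁻¹)⁻¹ = (R : (R : X))`. -/
def vOp {T : Type*} [CommRing T] (R : Subring T) (X : Set T) : Set T :=
  colonS R (colonS R X)

/-- `M` is an `R`-submodule of the ambient ring `T`. -/
def IsSubmoduleOf {T : Type*} [CommRing T] (R : Subring T) (M : Set T) : Prop :=
  (0 : T) ∈ M ∧ (∀ x ∈ M, ∀ y ∈ M, x + y ∈ M) ∧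
    ∀ r ∈ (R : Set T), ∀ x ∈ M, r * x ∈ M

/-- `I` is an (integral) ideal of the subring `R`. -/
def IsIdealOf {T : Type*} [CommRing T] (R : Subring T) (I : Set T) : Prop :=
  IsSubmoduleOf R I ∧ I ⊆ (R : Set T)

/-- `P` is a prime ideal of the subring `R`. -/
def IsPrimeIdealOf {T : Type*} [CommRing T] (R : Subring T) (P : Set T) : Prop :=
  IsIdealOf R P ∧ P ≠ (R : Set T) ∧
    ∀ x ∈ (R : Set T), ∀ y ∈ (R : Set T), x * y ∈ P → x ∈ P ∨ y ∈ P

/-- `R` is a `v`-Marot ring: every regular fractional `v`-ideal `I` is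
`v`-generated by its set `I^•` of regular elements, i.e. `I = (I^•·R)_v`. -/
def IsVMarot {T : Type*} [CommRing T] (R : Subring T) : Prop :=
  ∀ I : Set T, IsSubmoduleOf R I → (∃ x ∈ I, x ∈ reg (Set.univ : Set T)) →
    (∃ c ∈ reg (R : Set T), ∀ x ∈ I, c * x ∈ R) → vOp R I = I →
    I = vOp R (I ∩ reg (Set.univ : Set T))

/-- `D` is completely integrally closed in the ambient total quotient ring `T`:
every almost integral element of `T` lies in `D`. -/
def IsCIC {T : Type*} [CommRing T] (D : Subring T) : Prop :=
  ∀ x : T, (∃ c ∈ reg (D : Set T), ∀ n : ℕ, c * x ^ n ∈ D) → x ∈ D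

/-- `D` is a Mori ring: the ascending chain condition holds on regular
divisorial integral ideals of `D`. -/
def IsMoriRing {T : Type*} [CommRing T] (D : Subring T) : Prop :=
  ∀ f : ℕ → Set T,
    (∀ n, f n ⊆ (D : Set T) ∧ vOp D (f n) = f n ∧ ∃ x ∈ f n, x ∈ reg (D : Set T)) →
    (∀ n, f n ⊆ f (n + 1)) → ∃ n, ∀ m, n ≤ m → f m = f n

/-- `X_r(R)`: the set of regular prime ideals of `R` of regular height one,
i.e. those regular prime ideals containing no strictly smaller regular prime
ideal. -/
def regHtOne {T : Type*} [CommRing T] (R : Subring T) : Set (Set T) :=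
  {P | IsPrimeIdealOf R P ∧ (∃ x ∈ P, x ∈ reg (R : Set T)) ∧
    ∀ Q : Set T, IsPrimeIdealOf R Q → (∃ x ∈ Q, x ∈ reg (R : Set T)) → Q ⊆ P → Q = P}

/-- `R_[P] = {z ∈ T : z·s ∈ R for some s ∈ R ∖ P}`. -/
def locB {T : Type*} [CommRing T] (R : Subring T) (P : Set T) : Set T :=
  {z : T | ∃ s ∈ (R : Set T), s ∉ P ∧ z * s ∈ R}

/-- `R` is a weakly Krull ring: `R = ⋂_{P ∈ X_r(R)} R_[P]` and every regular
element of `R` lies in only finitely many members of `X_r(R)`. -/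
def IsWeaklyKrull {T : Type*} [CommRing T] (R : Subring T) : Prop :=
  ((R : Set T) = ⋂ P ∈ regHtOne R, locB R P) ∧
    ∀ x ∈ reg (R : Set T), {P ∈ regHtOne R | x ∈ P}.Finite

section Main
variable {T : Type*} [CommRing T] (R : Subring T) {ι : Type*}



lemma colonS_anti {X Y : Set T} (h : X ⊆ Y) : colonS R Y ⊆ colonS R X :=
  fun _ hz x hx => hz x (h hx)

lemma subset_vOp (X : Set T) : X ⊆ vOp R X := by
  intro x hx z hz
  rw [mul_comm]; exact hz x hx

lemma colonS_vOp (X : Set T) : colonS R (vOp R X) = colonS R X :=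
  le_antisymm (colonS_anti R (subset_vOp R X)) (subset_vOp R (colonS R X))

lemma vOp_idem (X : Set T) : vOp R (vOp R X) = vOp R X := by
  show colonS R (colonS R (vOp R X)) = vOp R X
  rw [colonS_vOp]; rfl

lemma vOp_mono {X Y : Set T} (h : X ⊆ Y) : vOp R X ⊆ vOp R Y :=
  colonS_anti R (colonS_anti R h)

lemma one_mem_colonS {X : Set T} (hX : X ⊆ (R : Set T)) : (1 : T) ∈ colonS R X := by
  intro x hx; rw [one_mul]; exact hX hx

lemma vOp_subset_R {X : Set T} (hX : X ⊆ (R : Set T)) : vOp R X ⊆ (R : Set T) := by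
  intro w hw
  have := hw 1 (one_mem_colonS R hX)
  rwa [mul_one] at this

lemma colonS_submodule (X : Set T) : IsSubmoduleOf R (colonS R X) := by
  refine ⟨fun x hx => by rw [zero_mul]; exact R.zero_mem, ?_, ?_⟩
  · intro z hz w hw x hx
    rw [add_mul]; exact R.add_mem (hz x hx) (hw x hx)
  · intro r hr z hz x hx
    rw [mul_assoc]; exact R.mul_mem hr (hz x hx)

lemma vOp_submodule (X : Set T) : IsSubmoduleOf R (vOp R X) := colonS_submodule R _

lemma vOp_isIdeal {X : Set T} (hX : X ⊆ (R : Set T)) : IsIdealOf R (vOp R X) :=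
  ⟨vOp_submodule R X, vOp_subset_R R hX⟩

/-- v7 : if `y·A ⊆ B` and `B` is divisorial then `y · A_v ⊆ B`. -/
lemma mul_vOp_subset {y : T} {A B : Set T} (hB : vOp R B = B)
    (h : ∀ a ∈ A, y * a ∈ B) : ∀ w ∈ vOp R A, y * w ∈ B := by
  intro w hw
  rw [← hB]
  intro z hz
  have hzy : z * y ∈ colonS R A := by
    intro a ha
    have : (z * y) * a = z * (y * a) := by ring
    rw [this]; exact hz _ (h a ha)
  have := hw _ hzy
  have e : w * (z * y) = y * w * z := by ring
  rwa [e] at this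

lemma one_not_mem_prime {P : Set T} (hP : IsPrimeIdealOf R P) : (1 : T) ∉ P := by
  intro h1
  apply hP.2.1
  apply le_antisymm hP.1.2
  intro r hr
  have := hP.1.1.2.2 r hr 1 h1
  rwa [mul_one] at this

lemma pow_mem_prime {P : Set T} (hP : IsPrimeIdealOf R P) {t : T} (ht : t ∈ (R : Set T))
    {k : ℕ} (h : t ^ k ∈ P) : t ∈ P := by
  induction k with
  | zero => exact absurd h (by simpa using one_not_mem_prime R hP)
  | succ n ih =>
    rw [pow_succ] at h
    rcases hP.2.2 _ (by exact pow_mem (by exact ht) n) t ht h with h' | h'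
    · exact ih h'
    · exact h'

lemma mem_prime_of_mul_left {P : Set T} (hP : IsPrimeIdealOf R P) {s t : T}
    (hs : s ∈ (R : Set T)) (ht : t ∈ (R : Set T)) (hsP : s ∉ P) (h : s * t ∈ P) : t ∈ P := by
  rcases hP.2.2 s hs t ht h with h' | h'
  · exact absurd h' hsP
  · exact h'



lemma prod_mem_ideal {s : Finset ι} {f : ι → T} (hf : ∀ i ∈ s, f i ∈ (R : Set T))
    {I : Set T} (hI : IsIdealOf R I) {q : ι} (hq : q ∈ s) (hfq : f q ∈ I) :
    ∏ i ∈ s, f i ∈ I := by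
  classical
  rw [← Finset.mul_prod_erase s f hq, mul_comm]
  refine hI.1.2.2 _ ?_ _ hfq
  exact prod_mem (fun i hi => hf i (Finset.mem_of_mem_erase hi))

lemma prod_not_mem_prime {P : Set T} (hP : IsPrimeIdealOf R P) {s : Finset ι} {f : ι → T}
    (hf : ∀ i ∈ s, f i ∈ (R : Set T) ∧ f i ∉ P) : ∏ i ∈ s, f i ∉ P := by
  classical
  induction s using Finset.induction_on with
  | empty => simpa using one_not_mem_prime R hP
  | insert a s' ha ih =>
    rw [Finset.prod_insert ha]
    intro hmem
    have hfs : ∀ i ∈ s', f i ∈ (R : Set T) ∧ f i ∉ P := fun i hi => hf i (Finset.mem_insert_of_mem hi)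
    have hprodR : ∏ i ∈ s', f i ∈ (R : Set T) := prod_mem (fun i hi => (hfs i hi).1)
    rcases hP.2.2 _ (hf a (Finset.mem_insert_self a s')).1 _ hprodR hmem with h | h
    · exact (hf a (Finset.mem_insert_self a s')).2 h
    · exact ih hfs h



lemma exists_maximal (hmori : IsMoriRing R) (Ps : Set (Set T))
    (hPs : ∀ J ∈ Ps, J ⊆ (R : Set T) ∧ vOp R J = J ∧ ∃ x ∈ J, x ∈ reg (R : Set T))
    (hne : Ps.Nonempty) : ∃ M ∈ Ps, ∀ J ∈ Ps, ¬ M ⊂ J := by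
  by_contra h
  push_neg at h
  obtain ⟨J₀, hJ₀⟩ := hne
  have h' : ∀ p : {A : Set T // A ∈ Ps}, ∃ q : {A : Set T // A ∈ Ps}, p.1 ⊂ q.1 := by
    intro p
    obtain ⟨J, hJ, hsub⟩ := h p.1 p.2
    exact ⟨⟨J, hJ⟩, hsub⟩
  choose F hF using h'
  let g : ℕ → {A : Set T // A ∈ Ps} := fun n => Nat.rec ⟨J₀, hJ₀⟩ (fun _ p => F p) n
  have hstep : ∀ n, (g n).1 ⊂ (g (n + 1)).1 := fun n => hF (g n)
  obtain ⟨n, hn⟩ := hmori (fun n => (g n).1)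
    (fun n => hPs _ (g n).2) (fun n => (hstep n).subset)
  exact (hstep n).ne ((hn (n + 1) (Nat.le_succ n)).symm ▸ rfl)



lemma lemmaA {P : Set T} (hP : P ∈ regHtOne R) {a : T} (ha : a ∈ P)
    (haR : a ∈ reg (R : Set T)) {c : T} (hc : c ∈ P) :
    ∃ m : ℕ, ∃ s ∈ (R : Set T), s ∉ P ∧ ∃ r ∈ (R : Set T), c ^ m * s = a * r := by
  by_contra hcon
  push_neg at hcon
  have hPP : IsPrimeIdealOf R P := hP.1
  have hPsub : P ⊆ (R : Set T) := hPP.1.2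
  have h1P : (1 : T) ∉ P := one_not_mem_prime R hPP
  set M : Set T := {x | ∃ s ∈ (R : Set T), s ∉ P ∧ ∃ m : ℕ, x = c ^ m * s} with hM
  set aR : Set T := {x | ∃ r ∈ (R : Set T), x = a * r} with haRdef
  have haR_ideal : IsIdealOf R aR := by
    constructor
    · refine ⟨⟨0, R.zero_mem, by ring⟩, ?_, ?_⟩
      · rintro x ⟨r, hr, rfl⟩ y ⟨r', hr', rfl⟩
        exact ⟨r + r', R.add_mem hr hr', by ring⟩
      · rintro r hr x ⟨r', hr', rfl⟩
        exact ⟨r * r', R.mul_mem hr hr', by ring⟩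
    · rintro x ⟨r, hr, rfl⟩
      exact R.mul_mem haR.1 hr
  set S : Set (Set T) := {J | IsIdealOf R J ∧ aR ⊆ J ∧ ∀ x ∈ J, x ∉ M} with hS
  have haRS : aR ∈ S := by
    refine ⟨haR_ideal, le_refl _, ?_⟩
    rintro x ⟨r, hr, rfl⟩ ⟨s, hsR, hsP, m, hx⟩
    exact hcon m s hsR hsP r hr hx.symm
  have hchain : ∀ ch ⊆ S, IsChain (· ⊆ ·) ch → ch.Nonempty → ∃ ub ∈ S, ∀ s ∈ ch, s ⊆ ub := by
    intro ch hchS hch hchne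
    refine ⟨⋃₀ ch, ⟨⟨⟨?_, ?_, ?_⟩, ?_⟩, ?_, ?_⟩, ?_⟩
    · obtain ⟨J₀, hJ₀⟩ := hchne
      exact ⟨J₀, hJ₀, (hchS hJ₀).1.1.1⟩
    · rintro x ⟨J₁, hJ₁, hx⟩ y ⟨J₂, hJ₂, hy⟩
      rcases hch.total hJ₁ hJ₂ with h | h
      · exact ⟨J₂, hJ₂, (hchS hJ₂).1.1.2.1 x (h hx) y hy⟩
      · exact ⟨J₁, hJ₁, (hchS hJ₁).1.1.2.1 x hx y (h hy)⟩
    · rintro r hr x ⟨J₁, hJ₁, hx⟩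
      exact ⟨J₁, hJ₁, (hchS hJ₁).1.1.2.2 r hr x hx⟩
    · rintro x ⟨J₁, hJ₁, hx⟩
      exact (hchS hJ₁).1.2 hx
    · obtain ⟨J₀, hJ₀⟩ := hchne
      exact fun x hx => ⟨J₀, hJ₀, (hchS hJ₀).2.1 hx⟩
    · rintro x ⟨J₁, hJ₁, hx⟩
      exact (hchS hJ₁).2.2 x hx
    · exact fun J₁ hJ₁ x hx => ⟨J₁, hJ₁, hx⟩
  obtain ⟨J, hJsub, hJS, hJmax⟩ : ∃ J, aR ⊆ J ∧ J ∈ S ∧ ∀ K ∈ S, J ⊆ K → K = J := by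
    obtain ⟨J, hsub, hmax⟩ := zorn_subset_nonempty S hchain aR haRS
    exact ⟨J, hsub, hmax.1, fun K hK hJK => (hmax.2 hK hJK).antisymm hJK⟩
  obtain ⟨⟨hJsm, hJR⟩, hJaR, hJM⟩ := hJS
  -- J is proper
  have h1J : (1 : T) ∉ J := fun h => hJM 1 h ⟨1, R.one_mem, h1P, 0, by ring⟩
  have hJne : J ≠ (R : Set T) := fun h => h1J (h ▸ R.one_mem)
  -- J is prime
  have hJprime : IsPrimeIdealOf R J := by
    refine ⟨⟨hJsm, hJR⟩, hJne, ?_⟩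
    intro x hx y hy hxy
    by_contra hcon2
    push_neg at hcon2
    obtain ⟨hxJ, hyJ⟩ := hcon2
    have hext : ∀ w ∈ (R : Set T), w ∉ J → ∃ μ ∈ M, ∃ j ∈ J, ∃ r ∈ (R : Set T), μ = j + w * r := by
      intro w hw hwJ
      set Jw : Set T := {u | ∃ j ∈ J, ∃ r ∈ (R : Set T), u = j + w * r} with hJw
      have hJwS : Jw ∉ S := by
        intro hmem
        have : Jw = J := hJmax Jw hmem (fun j hj => ⟨j, hj, 0, R.zero_mem, by ring⟩)
        exact hwJ (this ▸ ⟨0, hJsm.1, 1, R.one_mem, by ring⟩)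
      have hJwIdeal : IsIdealOf R Jw := by
        constructor
        · refine ⟨⟨0, hJsm.1, 0, R.zero_mem, by ring⟩, ?_, ?_⟩
          · rintro u ⟨j, hj, r, hr, rfl⟩ u' ⟨j', hj', r', hr', rfl⟩
            exact ⟨j + j', hJsm.2.1 j hj j' hj', r + r', R.add_mem hr hr', by ring⟩
          · rintro ρ hρ u ⟨j, hj, r, hr, rfl⟩
            exact ⟨ρ * j, hJsm.2.2 ρ hρ j hj, ρ * r, R.mul_mem hρ hr, by ring⟩
        · rintro u ⟨j, hj, r, hr, rfl⟩
          exact R.add_mem (hJR hj) (R.mul_mem hw hr)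
      have haRJw : aR ⊆ Jw := fun u hu => ⟨u, hJaR hu, 0, R.zero_mem, by ring⟩
      have : ∃ μ ∈ Jw, μ ∈ M := by
        by_contra hno
        push_neg at hno
        exact hJwS ⟨hJwIdeal, haRJw, hno⟩
      obtain ⟨μ, ⟨j, hj, r, hr, rfl⟩, hμM⟩ := this
      exact ⟨j + w * r, hμM, j, hj, r, hr, rfl⟩
    obtain ⟨μ₁, hμ₁M, j₁, hj₁, r₁, hr₁, hμ₁⟩ := hext x hx hxJ
    obtain ⟨μ₂, hμ₂M, j₂, hj₂, r₂, hr₂, hμ₂⟩ := hext y hy hyJ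
    have hprodJ : μ₁ * μ₂ ∈ J := by
      rw [hμ₁, hμ₂]
      have e : (j₁ + x * r₁) * (j₂ + y * r₂)
          = (j₂ + y * r₂) * j₁ + (x * r₁) * j₂ + (r₁ * r₂) * (x * y) := by ring
      rw [e]
      refine hJsm.2.1 _ (hJsm.2.1 _ ?_ _ ?_) _ ?_
      · exact hJsm.2.2 _ (R.add_mem (hJR hj₂) (R.mul_mem hy hr₂)) _ hj₁
      · exact hJsm.2.2 _ (R.mul_mem hx hr₁) _ hj₂
      · exact hJsm.2.2 _ (R.mul_mem hr₁ hr₂) _ hxy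
    obtain ⟨s₁, hs₁R, hs₁P, m₁, hm₁⟩ := hμ₁M
    obtain ⟨s₂, hs₂R, hs₂P, m₂, hm₂⟩ := hμ₂M
    refine hJM _ hprodJ ⟨s₁ * s₂, R.mul_mem hs₁R hs₂R, ?_, m₁ + m₂, by rw [hm₁, hm₂]; ring⟩
    intro hss
    rcases hPP.2.2 s₁ hs₁R s₂ hs₂R hss with h | h
    · exact hs₁P h
    · exact hs₂P h
  -- J ⊆ P
  have hJP : J ⊆ P := by
    intro u hu
    by_contra huP
    exact hJM u hu ⟨u, hJR hu, huP, 0, by ring⟩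
  have haJ : a ∈ J := hJaR ⟨1, R.one_mem, by ring⟩
  have hJeqP : J = P := hP.2.2 J hJprime ⟨a, haJ, haR⟩ hJP
  exact hJM c (hJeqP ▸ hc) ⟨1, R.one_mem, h1P, 1, by ring⟩



end Main

def properFam {T : Type*} [CommRing T] (R : Subring T) : Set (Set T) :=
  {J | J ⊆ (R : Set T) ∧ vOp R J = J ∧ J ≠ (R : Set T) ∧ ∃ x ∈ J, x ∈ reg (R : Set T)}

section VMax
variable {T : Type*} [CommRing T] (R : Subring T)

lemma vmax_prime {M : Set T} (hM : M ∈ properFam R) (hmax : ∀ J ∈ properFam R, ¬ M ⊂ J) :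
    IsPrimeIdealOf R M := by
  obtain ⟨hMR, hMv, hMne, hMreg⟩ := hM
  have hMsm : IsSubmoduleOf R M := hMv ▸ vOp_submodule R M
  refine ⟨⟨hMsm, hMR⟩, hMne, ?_⟩
  intro x hx y hy hxy
  by_contra hc
  push_neg at hc
  obtain ⟨hxM, hyM⟩ := hc
  set Jx : Set T := {u | ∃ j ∈ M, ∃ r ∈ (R : Set T), u = j + x * r} with hJxdef
  have hMJx : M ⊆ Jx := fun j hj => ⟨j, hj, 0, R.zero_mem, by ring⟩
  have hxJx : x ∈ Jx := ⟨0, hMsm.1, 1, R.one_mem, by ring⟩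
  have hJxR : Jx ⊆ (R : Set T) := by
    rintro u ⟨j, hj, r, hr, rfl⟩
    exact R.add_mem (hMR hj) (R.mul_mem hx hr)
  have hvJx : vOp R Jx = (R : Set T) := by
    by_contra hne
    obtain ⟨w, hwM, hwreg⟩ := hMreg
    have hmem : vOp R Jx ∈ properFam R :=
      ⟨vOp_subset_R R hJxR, vOp_idem R Jx, hne, w, subset_vOp R Jx (hMJx hwM), hwreg⟩
    refine hmax _ hmem ⟨subset_trans hMJx (subset_vOp R Jx), fun habs => ?_⟩
    exact hxM (habs (subset_vOp R Jx hxJx))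
  have hyJx_mul : ∀ u ∈ Jx, y * u ∈ M := by
    rintro u ⟨j, hj, r, hr, rfl⟩
    have e : y * (j + x * r) = y * j + r * (x * y) := by ring
    rw [e]
    exact hMsm.2.1 _ (hMsm.2.2 y hy j hj) _ (hMsm.2.2 r hr _ hxy)
  have := mul_vOp_subset R hMv hyJx_mul 1 (by rw [hvJx]; exact R.one_mem)
  rw [mul_one] at this
  exact hyM this

lemma exists_vmax (hmori : IsMoriRing R) {I₀ : Set T} (hI₀ : I₀ ∈ properFam R) :
    ∃ M ∈ properFam R, I₀ ⊆ M ∧ IsPrimeIdealOf R M ∧ ∀ J ∈ properFam R, ¬ M ⊂ J := by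
  obtain ⟨M, hM, hmax'⟩ := exists_maximal R hmori {J | J ∈ properFam R ∧ I₀ ⊆ J}
    (fun J hJ => ⟨hJ.1.1, hJ.1.2.1, hJ.1.2.2.2⟩) ⟨I₀, hI₀, le_refl _⟩
  have hmax : ∀ J ∈ properFam R, ¬ M ⊂ J := by
    intro J hJ hsub
    exact hmax' J ⟨hJ, subset_trans hM.2 hsub.subset⟩ hsub
  exact ⟨M, hM.1, hM.2, vmax_prime R hM.1 hmax, hmax⟩

end VMax


section Backward
variable {T : Type*} [CommRing T] (R : Subring T)

lemma vOp_colonS (X : Set T) : vOp R (colonS R X) = colonS R X := by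
  show colonS R (vOp R X) = colonS R X
  exact colonS_vOp R X

lemma backward (hreg : ∀ x ∈ reg (R : Set T), IsUnit x)
    (hfr : ∀ t : T, ∃ r ∈ (R : Set T), ∃ s ∈ reg (R : Set T), t * s = r)
    (hmori : IsMoriRing R)
    (hEq : {P : Set T | IsPrimeIdealOf R P ∧ (∃ x ∈ P, x ∈ reg (R : Set T)) ∧ vOp R P = P}
        = regHtOne R) : IsWeaklyKrull R := by
  constructor
  · -- the intersection property
    apply le_antisymm
    · intro z hz
      apply Set.mem_iInter₂.2
      intro Q hQ
      exact ⟨1, R.one_mem, one_not_mem_prime R hQ.1, by rwa [mul_one]⟩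
    · intro z hz
      by_contra hzR
      set I : Set T := colonS R {1, z} with hIdef
      have hmemI : ∀ w, w ∈ I ↔ (w ∈ (R : Set T) ∧ w * z ∈ (R : Set T)) := by
        intro w
        constructor
        · intro hw
          refine ⟨by simpa using hw 1 (by simp), hw z (by simp)⟩
        · rintro ⟨h1, h2⟩ u hu
          rcases hu with rfl | rfl
          · simpa using h1
          · exact h2
      have hIR : I ⊆ (R : Set T) := fun w hw => ((hmemI w).1 hw).1
      have hIv : vOp R I = I := vOp_colonS R _
      have hIne : I ≠ (R : Set T) := by
        intro h
        apply hzR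
        have h1I : (1 : T) ∈ I := h ▸ R.one_mem
        simpa using ((hmemI 1).1 h1I).2
      obtain ⟨r, hrR, s, hsreg, hzs⟩ := hfr z
      have hsI : s ∈ I := (hmemI s).2 ⟨hsreg.1, by rw [mul_comm]; rw [hzs]; exact hrR⟩
      have hIfam : I ∈ properFam R := ⟨hIR, hIv, hIne, s, hsI, hsreg⟩
      obtain ⟨M, hMfam, hIM, hMprime, _⟩ := exists_vmax R hmori hIfam
      have hMX : M ∈ regHtOne R := by
        rw [← hEq]
        exact ⟨hMprime, hMfam.2.2.2, hMfam.2.1⟩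
      obtain ⟨s', hs'R, hs'M, hzs'⟩ := Set.mem_iInter₂.1 hz M hMX
      refine hs'M (hIM ((hmemI s').2 ⟨hs'R, by rwa [mul_comm]⟩))
  · -- finite character
    intro x hx
    by_contra hfin
    have hinf : Set.Infinite {P ∈ regHtOne R | x ∈ P} := hfin
    set e := hinf.natEmbedding with he
    set Pk : ℕ → Set T := fun n => (e n).1 with hPkdef
    have hPk : ∀ n, Pk n ∈ regHtOne R ∧ x ∈ Pk n := fun n => (e n).2
    have hPkinj : ∀ n m, n ≠ m → Pk n ≠ Pk m := by
      intro n m hnm h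
      exact hnm (e.injective (Subtype.ext h))
    have hPkv : ∀ n, vOp R (Pk n) = Pk n := by
      intro n
      have := (hPk n).1
      rw [← hEq] at this
      exact this.2.2
    have hPkR : ∀ n, Pk n ⊆ (R : Set T) := fun n => (hPk n).1.1.1.2
    obtain ⟨u, hu⟩ := hreg x hx
    set xinv : T := ((u⁻¹ : Tˣ) : T) with hxinv
    have hxx : x * xinv = 1 := by rw [← hu]; exact u.mul_inv
    have hxx' : xinv * x = 1 := by rw [mul_comm]; exact hxx
    set I : ℕ → Set T := fun n => ⋂ k ∈ Finset.range (n + 1), Pk k with hIdef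
    have hmemIiff : ∀ n w, w ∈ I n ↔ ∀ k ∈ Finset.range (n + 1), w ∈ Pk k := by
      intro n w; exact Set.mem_iInter₂
    have hIR : ∀ n, I n ⊆ (R : Set T) := by
      intro n w hw
      exact hPkR 0 ((hmemIiff n w).1 hw 0 (Finset.mem_range.2 (Nat.succ_pos n)))
    have hIdiv : ∀ n, vOp R (I n) = I n := by
      intro n
      apply le_antisymm
      · intro w hw
        apply (hmemIiff n w).2
        intro k hk
        have : vOp R (I n) ⊆ vOp R (Pk k) :=
          vOp_mono R (fun u hu => (hmemIiff n u).1 hu k hk)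
        exact (hPkv k) ▸ this hw
      · exact subset_vOp R _
    have hxI : ∀ n, x ∈ I n := by
      intro n
      exact (hmemIiff n x).2 fun k _ => (hPk k).2
    have hImono : ∀ n, I (n + 1) ⊆ I n := by
      intro n w hw
      apply (hmemIiff n w).2
      intro k hk
      exact (hmemIiff (n + 1) w).1 hw k
        (Finset.mem_range.2 (lt_trans (Finset.mem_range.1 hk) (Nat.lt_succ_self _)))
    set J : ℕ → Set T := fun n => {y | ∃ w ∈ colonS R (I n), y = x * w} with hJdef
    have hJR : ∀ n, J n ⊆ (R : Set T) := by
      rintro n y ⟨w, hw, rfl⟩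
      rw [mul_comm]
      exact hw x (hxI n)
    have hcJ : ∀ n, colonS R (J n) = {w | w * x ∈ I n} := by
      intro n
      ext w
      constructor
      · intro hw
        show w * x ∈ I n
        rw [← hIdiv n]
        intro ζ hζ
        have : x * ζ ∈ J n := ⟨ζ, hζ, rfl⟩
        have h2 := hw _ this
        have e2 : w * (x * ζ) = w * x * ζ := by ring
        rwa [e2] at h2
      · rintro hw y ⟨w', hw', rfl⟩
        have e2 : w * (x * w') = w' * (w * x) := by ring
        rw [e2]
        exact hw' _ hw
    have hJv : ∀ n, vOp R (J n) = J n := by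
      intro n
      show colonS R (colonS R (J n)) = J n
      rw [hcJ n]
      ext y
      constructor
      · intro hy
        refine ⟨y * xinv, ?_, by rw [show x * (y * xinv) = y * (x * xinv) by ring, hxx, mul_one]⟩
        intro ι hι
        have hwx : (xinv * ι) * x = ι := by
          rw [show (xinv * ι) * x = ι * (xinv * x) by ring, hxx', mul_one]
        have := hy (xinv * ι) (by rw [Set.mem_setOf_eq, hwx]; exact hι)
        rwa [show y * (xinv * ι) = y * xinv * ι by ring] at this
      · rintro ⟨w', hw', rfl⟩ w hw
        have e2 : x * w' * w = w' * (w * x) := by ring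
        rw [e2]
        exact hw' _ hw
    have hxJ : ∀ n, x ∈ J n := fun n => ⟨1, one_mem_colonS R (hIR n), (mul_one x).symm⟩
    have hJmono : ∀ n, J n ⊆ J (n + 1) := by
      rintro n y ⟨w, hw, rfl⟩
      exact ⟨w, fun ι hι => hw ι (hImono n hι), rfl⟩
    obtain ⟨N, hN⟩ := hmori J (fun n => ⟨hJR n, hJv n, x, hxJ n, hx⟩) hJmono
    have hJeq : J (N + 1) = J N := hN (N + 1) (Nat.le_succ N)
    have hIsub : I N ⊆ I (N + 1) := by
      intro ι hι
      have hcol : ({w : T | w * x ∈ I N} : Set T) = {w : T | w * x ∈ I (N + 1)} := by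
        rw [← hcJ, ← hcJ, hJeq]
      have hwx : (ι * xinv) * x = ι := by
        rw [show (ι * xinv) * x = ι * (xinv * x) by ring, hxx', mul_one]
      have hmem : ι * xinv ∈ {w : T | w * x ∈ I N} := by rw [Set.mem_setOf_eq, hwx]; exact hι
      rw [hcol] at hmem
      rw [Set.mem_setOf_eq, hwx] at hmem
      exact hmem
    -- contradiction via products
    have hck : ∀ k : ℕ, ∃ cc : T, k < N + 1 → cc ∈ Pk k ∧ cc ∉ Pk (N + 1) := by
      intro k
      by_cases h : k < N + 1
      · have hne : Pk k ≠ Pk (N + 1) := hPkinj k (N + 1) (Nat.ne_of_lt h)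
        have hnsub : ¬ Pk k ⊆ Pk (N + 1) := by
          intro hsub
          exact hne ((hPk (N + 1)).1.2.2 (Pk k) (hPk k).1.1 (hPk k).1.2.1 hsub)
        obtain ⟨cc, hcc1, hcc2⟩ := Set.not_subset.1 hnsub
        exact ⟨cc, fun _ => ⟨hcc1, hcc2⟩⟩
      · exact ⟨0, fun hh => absurd hh h⟩
    choose cfun hcfun using hck
    have hbI : ∏ k ∈ Finset.range (N + 1), cfun k ∈ I N := by
      apply (hmemIiff N _).2
      intro k hk
      refine prod_mem_ideal R (fun j hj => hPkR j ((hcfun j (Finset.mem_range.1 hj)).1)) 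
        (hPk k).1.1.1 hk ((hcfun k (Finset.mem_range.1 hk)).1)
    have hbP : ∏ k ∈ Finset.range (N + 1), cfun k ∉ Pk (N + 1) := by
      apply prod_not_mem_prime R (hPk (N + 1)).1.1
      intro k hk
      exact ⟨hPkR k ((hcfun k (Finset.mem_range.1 hk)).1), (hcfun k (Finset.mem_range.1 hk)).2⟩
    exact hbP ((hmemIiff (N + 1) _).1 (hIsub hbI) (N + 1) (Finset.mem_range.2 (Nat.lt_succ_self _)))

end Backward

section Avoidance
variable {T : Type*} [CommRing T] (R : Subring T)

lemma ideal_neg_mem {I : Set T} (hI : IsSubmoduleOf R I) {x : T} (hx : x ∈ I) : -x ∈ I := by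
  have := hI.2.2 (-1) (R.neg_mem R.one_mem) x hx
  rwa [neg_one_mul] at this

lemma ideal_sub_mem {I : Set T} (hI : IsSubmoduleOf R I) {x y : T} (hx : x ∈ I)
    (hxy : x + y ∈ I) : y ∈ I := by
  have := hI.2.1 _ hxy _ (ideal_neg_mem R hI hx)
  rwa [add_comm x y, add_assoc, add_neg_cancel, add_zero] at this

lemma prime_avoid (s : Finset (Set T)) : (∀ p ∈ s, IsPrimeIdealOf R p) →
    ∀ M : Set T, IsIdealOf R M → (∀ p ∈ s, ¬ M ⊆ p) → ∃ b ∈ M, ∀ p ∈ s, b ∉ p := by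
  classical
  induction s using Finset.strongInduction with
  | _ s ih =>
    intro hp M hM hns
    rcases Finset.eq_empty_or_nonempty s with rfl | ⟨p, hps⟩
    · exact ⟨0, hM.1.1, by simp⟩
    have key : ∀ q ∈ s, ∃ b ∈ M, ∀ p' ∈ s.erase q, b ∉ p' := by
      intro q hq
      exact ih (s.erase q) (Finset.erase_ssubset hq)
        (fun p' hp' => hp p' (Finset.mem_of_mem_erase hp')) M hM
        (fun p' hp' => hns p' (Finset.mem_of_mem_erase hp'))
    choose! bf hbfM hbf using key
    by_cases hall : ∀ q ∈ s, bf q ∈ q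
    · by_cases hs1 : s.erase p = ∅
      · obtain ⟨b, hbM, hbp⟩ := Set.not_subset.1 (hns p hps)
        refine ⟨b, hbM, fun p' hp' => ?_⟩
        have hpp : p' = p := by
          by_contra hne
          exact (Finset.eq_empty_iff_forall_notMem.1 hs1 p') (Finset.mem_erase.2 ⟨hne, hp'⟩)
        exact hpp ▸ hbp
      · have herase_ne : (s.erase p).Nonempty := Finset.nonempty_iff_ne_empty.2 hs1
        obtain ⟨q0, hq0⟩ := herase_ne
        set pr : T := ∏ q ∈ s.erase p, bf q with hpr
        have hprM : pr ∈ M :=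
          prod_mem_ideal R
            (fun q hq => hM.2 (hbfM q (Finset.mem_of_mem_erase hq))) hM hq0
            (hbfM q0 (Finset.mem_of_mem_erase hq0))
        have hbM : bf p + pr ∈ M := hM.1.2.1 _ (hbfM p hps) _ hprM
        refine ⟨bf p + pr, hbM, fun p' hp' => ?_⟩
        by_cases hpp : p' = p
        · subst hpp
          intro hmem
          have hprp : pr ∉ p' := by
            apply prod_not_mem_prime R (hp p' hp')
            intro q hq
            refine ⟨hM.2 (hbfM q (Finset.mem_of_mem_erase hq)), ?_⟩
            have : p' ∈ s.erase q := Finset.mem_erase.2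
              ⟨fun h => (Finset.mem_erase.1 hq).1 h.symm, hp'⟩
            exact hbf q (Finset.mem_of_mem_erase hq) p' this
          exact hprp (ideal_sub_mem R (hp p' hp').1.1 (hall p' hp') hmem)
        · have hp'erase : p' ∈ s.erase p := Finset.mem_erase.2 ⟨hpp, hp'⟩
          intro hmem
          have hprp : pr ∈ p' :=
            prod_mem_ideal R (fun q hq => hM.2 (hbfM q (Finset.mem_of_mem_erase hq)))
              (hp p' hp').1 hp'erase (hall p' hp')
          have hbfpp : bf p ∈ p' := by
            have := (hp p' hp').1.1
            have h2 : pr + bf p ∈ p' := by rwa [add_comm] at hmem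
            exact ideal_sub_mem R this hprp h2
          exact hbf p hps p' hp'erase hbfpp
    · push_neg at hall
      obtain ⟨q, hq, hbq⟩ := hall
      refine ⟨bf q, hbfM q hq, fun p' hp' => ?_⟩
      by_cases h : p' = q
      · exact h ▸ hbq
      · exact hbf q hq p' (Finset.mem_erase.2 ⟨h, hp'⟩)

end Avoidance

section ForwardSub
variable {T : Type*} [CommRing T] (R : Subring T)

lemma colonS_R_self : colonS R (R : Set T) = (R : Set T) := by
  apply le_antisymm
  · intro z hz
    have := hz 1 R.one_mem
    rwa [mul_one] at this
  · intro r hr x hx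
    exact R.mul_mem hr hx

lemma forward_sub (hWK : IsWeaklyKrull R) (hmori : IsMoriRing R) {P : Set T}
    (hPprime : IsPrimeIdealOf R P) (hPreg : ∃ x ∈ P, x ∈ reg (R : Set T))
    (hPv : vOp R P = P) : P ∈ regHtOne R := by
  classical
  obtain ⟨a, haP, hareg⟩ := hPreg
  have hPfam : P ∈ properFam R := ⟨hPprime.1.2, hPv, hPprime.2.1, a, haP, hareg⟩
  obtain ⟨M, hMfam, hPM, hMprime, hMmax⟩ := exists_vmax R hmori hPfam
  have haM : a ∈ M := hPM haP
  have hSfin : {Q | Q ∈ regHtOne R ∧ a ∈ Q}.Finite := hWK.2 a hareg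
  have hex : ∃ Q ∈ hSfin.toFinset, M ⊆ Q := by
    by_contra hno
    push_neg at hno
    obtain ⟨b, hbM, hbavoid⟩ := prime_avoid R hSfin.toFinset
      (fun q hq => (hSfin.mem_toFinset.1 hq).1.1) M hMprime.1 hno
    have hbR : b ∈ (R : Set T) := hMprime.1.2 hbM
    have hCR : colonS R {a, b} ⊆ (R : Set T) := by
      intro z hz
      have hza : z * a ∈ (R : Set T) := hz a (by simp)
      have hzb : z * b ∈ (R : Set T) := hz b (by simp)
      rw [show (R : Set T) = ⋂ Q ∈ regHtOne R, locB R Q from hWK.1]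
      apply Set.mem_iInter₂.2
      intro Q hQ
      by_cases haQ : a ∈ Q
      · exact ⟨b, hbR, hbavoid Q (hSfin.mem_toFinset.2 ⟨hQ, haQ⟩), hzb⟩
      · exact ⟨a, hareg.1, haQ, hza⟩
    have hRC : (R : Set T) ⊆ colonS R {a, b} := by
      intro r hr x hx
      rcases hx with rfl | rfl
      · exact R.mul_mem hr hareg.1
      · exact R.mul_mem hr hbR
    have hC : colonS R {a, b} = (R : Set T) := le_antisymm hCR hRC
    have hvab : vOp R {a, b} = (R : Set T) := by
      show colonS R (colonS R {a, b}) = (R : Set T)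
      rw [hC, colonS_R_self]
    have habM : ({a, b} : Set T) ⊆ M := by
      intro x hx
      rcases hx with rfl | rfl
      · exact haM
      · exact hbM
    have : (R : Set T) ⊆ M := by
      rw [← hvab, ← hMfam.2.1]
      exact vOp_mono R habM
    exact hMfam.2.2.1 (le_antisymm hMfam.1 this)
  obtain ⟨Q, hQsf, hMQ⟩ := hex
  have hQ := hSfin.mem_toFinset.1 hQsf
  have hMeqQ : M = Q := hQ.1.2.2 M hMprime ⟨a, haM, hareg⟩ hMQ
  have hMX : M ∈ regHtOne R := hMeqQ ▸ hQ.1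
  have hPeqM : P = M := hMX.2.2 P hPprime ⟨a, haP, hareg⟩ hPM
  exact hPeqM ▸ hMX

end ForwardSub

section ForwardSup
variable {T : Type*} [CommRing T] (R : Subring T)

lemma pow_not_mem_prime {P : Set T} (hP : IsPrimeIdealOf R P) {c : T} (hc : c ∈ (R : Set T))
    (hcP : c ∉ P) (m : ℕ) : c ^ m ∉ P := by
  induction m with
  | zero => simpa using one_not_mem_prime R hP
  | succ n ih =>
    intro h
    rw [pow_succ] at h
    rcases hP.2.2 _ (pow_mem hc n) c hc h with h' | h'
    · exact ih h'
    · exact hcP h'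

lemma forward_sup (hreg : ∀ x ∈ reg (R : Set T), IsUnit x)
    (hWK : IsWeaklyKrull R) (hmori : IsMoriRing R) {P : Set T}
    (hPX : P ∈ regHtOne R) : vOp R P = P := by
  classical
  obtain ⟨a, haP, hareg⟩ := hPX.2.1
  have hPprime : IsPrimeIdealOf R P := hPX.1
  have hPR : P ⊆ (R : Set T) := hPprime.1.2
  have haR : a ∈ (R : Set T) := hareg.1
  obtain ⟨ua, hua⟩ := hreg a hareg
  set ainv : T := ((ua⁻¹ : Tˣ) : T) with hainv
  have haa : a * ainv = 1 := by rw [← hua]; exact ua.mul_inv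
  have hSfin : {Q | Q ∈ regHtOne R ∧ a ∈ Q}.Finite := hWK.2 a hareg
  set sf : Finset (Set T) := hSfin.toFinset.erase P with hsf
  have hsfX : ∀ Q ∈ sf, Q ∈ regHtOne R ∧ a ∈ Q ∧ Q ≠ P := by
    intro Q hQ
    obtain ⟨hne, hmem⟩ := Finset.mem_erase.1 hQ
    obtain ⟨h1, h2⟩ := hSfin.mem_toFinset.1 hmem
    exact ⟨h1, h2, hne⟩
  have hcq_ex : ∀ Q ∈ sf, ∃ cc, cc ∈ Q ∧ cc ∉ P := by
    intro Q hQ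
    obtain ⟨hQX, _, hQne⟩ := hsfX Q hQ
    have : ¬ Q ⊆ P := fun hsub => hQne (hPX.2.2 Q hQX.1 hQX.2.1 hsub)
    obtain ⟨cc, h1, h2⟩ := Set.not_subset.1 this
    exact ⟨cc, h1, h2⟩
  choose! cq hcq1 hcq2 using hcq_ex
  set c : T := ∏ Q ∈ sf, cq Q with hc
  have hcR : c ∈ (R : Set T) :=
    prod_mem (fun Q hQ => (hsfX Q hQ).1.1.1.2 (hcq1 Q hQ))
  have hcP : c ∉ P :=
    prod_not_mem_prime R hPprime
      (fun Q hQ => ⟨(hsfX Q hQ).1.1.1.2 (hcq1 Q hQ), hcq2 Q hQ⟩)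
  have hcQ : ∀ Q ∈ sf, c ∈ Q := by
    intro Q hQ
    exact prod_mem_ideal R (fun Q' hQ' => (hsfX Q' hQ').1.1.1.2 (hcq1 Q' hQ'))
      (hsfX Q hQ).1.1.1 hQ (hcq1 Q hQ)
  have hlemA : ∀ Q ∈ sf, ∃ m : ℕ, ∃ s ∈ (R : Set T), s ∉ Q ∧
      ∃ r ∈ (R : Set T), c ^ m * s = a * r := by
    intro Q hQ
    exact lemmaA R (hsfX Q hQ).1 (hsfX Q hQ).2.1 hareg (hcQ Q hQ)
  choose! mq sq hsqR hsqQ rq hrqR heq using hlemA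
  set mstar : ℕ := sf.sup mq with hmstar
  have hshift : ∀ Q ∈ sf, c ^ mstar * sq Q = c ^ (mstar - mq Q) * (a * rq Q) := by
    intro Q hQ
    have hle : mq Q ≤ mstar := Finset.le_sup hQ
    calc c ^ mstar * sq Q = c ^ (mstar - mq Q) * (c ^ mq Q * sq Q) := by
          rw [← mul_assoc, ← pow_add, Nat.sub_add_cancel hle]
      _ = c ^ (mstar - mq Q) * (a * rq Q) := by rw [heq Q hQ]
  -- the P-primary component of aR
  set I : Set T := {x | x ∈ (R : Set T) ∧ ∃ s ∈ (R : Set T), s ∉ P ∧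
      ∃ r ∈ (R : Set T), x * s = a * r} with hI
  have h1P : (1 : T) ∉ P := one_not_mem_prime R hPprime
  have haI : ∀ ρ ∈ (R : Set T), a * ρ ∈ I := by
    intro ρ hρ
    exact ⟨R.mul_mem haR hρ, 1, R.one_mem, h1P, ρ, hρ, by ring⟩
  have hIR : I ⊆ (R : Set T) := fun x hx => hx.1
  have hIP : I ⊆ P := by
    rintro x ⟨hxR, s, hsR, hsP, r, hrR, hxs⟩
    have : x * s ∈ P := by
      rw [hxs, mul_comm]
      exact hPprime.1.1.2.2 r hrR a haP
    rcases hPprime.2.2 x hxR s hsR this with h | h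
    · exact h
    · exact absurd h hsP
  -- the key lemma : (c^mstar * ainv) multiplies I into R
  have hzI : ∀ x ∈ I, (c ^ mstar * ainv) * x ∈ (R : Set T) := by
    rintro x ⟨hxR, s, hsR, hsP, r, hrR, hxs⟩
    rw [show (R : Set T) = ⋂ Q ∈ regHtOne R, locB R Q from hWK.1]
    apply Set.mem_iInter₂.2
    intro Q hQX2
    by_cases haQ : a ∈ Q
    · by_cases hQP : Q = P
      · subst hQP
        refine ⟨s, hsR, hsP, ?_⟩
        have e : c ^ mstar * ainv * x * s = c ^ mstar * r * (a * ainv) := by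
          rw [show c ^ mstar * ainv * x * s = c ^ mstar * (x * s) * ainv by ring, hxs]; ring
        rw [e, haa, mul_one]
        exact R.mul_mem (pow_mem hcR mstar) hrR
      · have hQsf : Q ∈ sf := Finset.mem_erase.2 ⟨hQP, hSfin.mem_toFinset.2 ⟨hQX2, haQ⟩⟩
        refine ⟨sq Q, hsqR Q hQsf, hsqQ Q hQsf, ?_⟩
        have e : c ^ mstar * ainv * x * sq Q
            = (c ^ mstar * sq Q) * x * ainv := by ring
        rw [e, hshift Q hQsf]
        have e2 : c ^ (mstar - mq Q) * (a * rq Q) * x * ainv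
            = c ^ (mstar - mq Q) * rq Q * x * (a * ainv) := by ring
        rw [e2, haa, mul_one]
        exact R.mul_mem (R.mul_mem (pow_mem hcR _) (hrqR Q hQsf)) hxR
    · refine ⟨a, haR, haQ, ?_⟩
      rw [show c ^ mstar * ainv * x * a = c ^ mstar * x * (a * ainv) by ring, haa, mul_one]
      exact R.mul_mem (pow_mem hcR mstar) hxR
  have hIvP : vOp R I ⊆ P := by
    intro t ht
    have htR : t ∈ (R : Set T) := vOp_subset_R R hIR ht
    have hzcol : (c ^ mstar * ainv) ∈ colonS R I := fun x hx => hzI x hx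
    have hρ : t * (c ^ mstar * ainv) ∈ (R : Set T) := ht _ hzcol
    have e : t * c ^ mstar = (t * (c ^ mstar * ainv)) * a := by
      rw [show t * (c ^ mstar * ainv) * a = t * c ^ mstar * (ainv * a) by ring,
        mul_comm ainv a, haa, mul_one]
    have hmemP : t * c ^ mstar ∈ P := by
      rw [e]
      exact hPprime.1.1.2.2 _ hρ a haP
    rcases hPprime.2.2 t htR _ (pow_mem hcR mstar) hmemP with h | h
    · exact h
    · exact absurd h (pow_not_mem_prime R hPprime hcR hcP mstar)
  -- the inductive step: adjoining an element of P keeps the v-closure inside P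
  have hstep : ∀ A : Set T, IsIdealOf R A → A ⊆ P → (∀ ρ ∈ (R : Set T), a * ρ ∈ A) →
      vOp R A ⊆ P → ∀ x ∈ P,
      vOp R {u | ∃ α ∈ A, ∃ ρ ∈ (R : Set T), u = α + x * ρ} ⊆ P := by
    intro A hAideal hAP haA hAvP x hxP
    obtain ⟨k, σ, hσR, hσP, rr, hrrR, hσeq⟩ := lemmaA R hPX haP hareg hxP
    set D : Set T := {u | ∃ α ∈ A, ∃ ρ ∈ (R : Set T), u = α + x * ρ} with hD
    have hxR : x ∈ (R : Set T) := hPR hxP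
    have hDR : D ⊆ (R : Set T) := by
      rintro u ⟨α, hα, ρ, hρ, rfl⟩
      exact R.add_mem (hAideal.2 hα) (R.mul_mem hxR hρ)
    intro t ht
    have htR : t ∈ (R : Set T) := vOp_subset_R R hDR ht
    have key : ∀ i : ℕ, i ≤ k → ∀ z ∈ colonS R A, z * (σ * x ^ (k - i) * t ^ i) ∈ (R : Set T) := by
      intro i
      induction i with
      | zero =>
        intro _ z hz
        have hmem : σ * x ^ k ∈ A := by
          rw [mul_comm, hσeq]
          exact haA rr hrrR
        have e : z * (σ * x ^ (k - 0) * t ^ 0) = z * (σ * x ^ k) := by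
          rw [Nat.sub_zero]; ring
        rw [e]
        exact hz _ hmem
      | succ i ih =>
        intro hik z hz
        have hik' : i ≤ k := Nat.le_of_succ_le hik
        have hw : z * σ * x ^ (k - (i + 1)) * t ^ i ∈ colonS R D := by
          rintro u ⟨α, hα, ρ, hρ, rfl⟩
          have e : z * σ * x ^ (k - (i + 1)) * t ^ i * (α + x * ρ)
              = (z * α) * (σ * x ^ (k - (i + 1)) * t ^ i)
                + (z * (σ * (x ^ (k - (i + 1)) * x) * t ^ i)) * ρ := by ring
          rw [e]
          have h1 : (z * α) * (σ * x ^ (k - (i + 1)) * t ^ i) ∈ (R : Set T) :=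
            R.mul_mem (hz α hα)
              (R.mul_mem (R.mul_mem hσR (pow_mem hxR _)) (pow_mem htR _))
          have hpow : x ^ (k - (i + 1)) * x = x ^ (k - i) := by
            rw [← pow_succ]
            congr 1
            omega
          have h2 : z * (σ * (x ^ (k - (i + 1)) * x) * t ^ i) ∈ (R : Set T) := by
            rw [hpow]
            exact ih hik' z hz
          exact R.add_mem h1 (R.mul_mem h2 hρ)
        have := ht _ hw
        have e2 : t * (z * σ * x ^ (k - (i + 1)) * t ^ i)
            = z * (σ * x ^ (k - (i + 1)) * t ^ (i + 1)) := by ring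
        rwa [e2] at this
    have hσtk : σ * t ^ k ∈ vOp R A := by
      intro z hz
      have h5 := key k (le_refl k) z hz
      have e3 : z * (σ * x ^ (k - k) * t ^ k) = σ * t ^ k * z := by
        rw [Nat.sub_self]; ring
      rwa [e3] at h5
    have hσtkP : σ * t ^ k ∈ P := hAvP hσtk
    have htkP : t ^ k ∈ P := by
      rcases hPprime.2.2 σ hσR _ (pow_mem htR k) hσtkP with h | h
      · exact absurd h hσP
      · exact h
    exact pow_mem_prime R hPprime htR htkP
  -- build the maximal divisorial ideal inside P via Mori
  set Fam : Set (Set T) := {A | IsIdealOf R A ∧ vOp R A = A ∧ A ⊆ P ∧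
      ∀ ρ ∈ (R : Set T), a * ρ ∈ A} with hFam
  have hA0 : vOp R I ∈ Fam := by
    refine ⟨vOp_isIdeal R hIR, vOp_idem R I, hIvP, ?_⟩
    intro ρ hρ
    exact subset_vOp R I (haI ρ hρ)
  obtain ⟨Astar, hAstar, hAmax⟩ := exists_maximal R hmori Fam
    (fun A hA => ⟨subset_trans hA.2.2.1 hPR, hA.2.1,
      a, by simpa using hA.2.2.2 1 R.one_mem, hareg⟩) ⟨vOp R I, hA0⟩
  have hPsub : P ⊆ Astar := by
    intro x hx
    by_contra hxA
    set D : Set T := {u | ∃ α ∈ Astar, ∃ ρ ∈ (R : Set T), u = α + x * ρ} with hD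
    have hDR : D ⊆ (R : Set T) := by
      rintro u ⟨α, hα, ρ, hρ, rfl⟩
      exact R.add_mem (hAstar.1.2 hα) (R.mul_mem (hPR hx) hρ)
    have hAD : Astar ⊆ D := fun α hα => ⟨α, hα, 0, R.zero_mem, by ring⟩
    have hxD : x ∈ D := ⟨0, hAstar.1.1.1, 1, R.one_mem, by ring⟩
    have hnew : vOp R D ∈ Fam := by
      refine ⟨vOp_isIdeal R hDR, vOp_idem R D, ?_, ?_⟩
      · exact hstep Astar hAstar.1 hAstar.2.2.1 hAstar.2.2.2
          (by rw [hAstar.2.1]; exact hAstar.2.2.1) x hx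
      · intro ρ hρ
        exact subset_vOp R D (hAD (hAstar.2.2.2 ρ hρ))
    refine hAmax _ hnew ⟨subset_trans hAD (subset_vOp R D), fun habs => ?_⟩
    exact hxA (habs (subset_vOp R D hxD))
  have hPeq : P = Astar := le_antisymm hPsub hAstar.2.2.1
  rw [hPeq]
  exact hAstar.2.1

end ForwardSup

/-- a `v`-Marot Mori ring `R` is weakly Krull if and only if the
set of regular prime `v`-ideals of `R` equals the set `X_r(R)` of regular prime
ideals of regular height one. -/
theorem stmt15 {T : Type*} [CommRing T] [Nontrivial T] (R : Subring T)
    (hreg : ∀ x ∈ reg (R : Set T), IsUnit x)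
    (hfr : ∀ t : T, ∃ r ∈ (R : Set T), ∃ s ∈ reg (R : Set T), t * s = r)
    (hvm : IsVMarot R) (hmori : IsMoriRing R) :
    IsWeaklyKrull R ↔
      {P : Set T | IsPrimeIdealOf R P ∧ (∃ x ∈ P, x ∈ reg (R : Set T)) ∧ vOp R P = P}
        = regHtOne R := by
  constructor
  · intro hWK
    ext P
    constructor
    · rintro ⟨h1, h2, h3⟩
      exact forward_sub R hWK hmori h1 h2 h3
    · intro hP
      exact ⟨hP.1, hP.2.1, forward_sup R hreg hWK hmori hP⟩
  · intro hEq
    exact backward R hreg hfr hmori hEq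

end Paper
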